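/- Let n be a positive integer, let p_1,…,p_n be real weights such that P_k ≥ 0 for all k = 1,…,n, let (a_k)_{k=1}^n and (b_k)_{k=1}^n be non-negative non-increasing sequences, and let p ≥ 1. Then (∑_{k=1}^n p_k a_k^p)^{1/p} + (∑_{k=1}^n p_k b_k^p)^{1/p} ≤ 2^{1 − 1/p} · (∑_{k=1}^n p_k (a_k + b_k)^p)^{1/p}. (Here the three sums are non-negative, so the real powers are well defined.) -/

import Mathlib

open Finset Real

lemma abel_nonneg (n : ℕ) (w c : ℕ → ℝ)
    (hP : ∀ k < n, 0 ≤ ∑ i ∈ Finset.range (k + 1), w i)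
    (hc0 : ∀ k < n, 0 ≤ c k)
    (hc : ∀ i, i + 1 < n → c (i + 1) ≤ c i) :
    0 ≤ ∑ k ∈ Finset.range n, w k * c k := by
  rcases Nat.eq_zero_or_pos n with rfl | hn
  · simp
  have key := Finset.sum_range_by_parts c w n
  simp only [smul_eq_mul] at key
  have hflip : ∑ k ∈ Finset.range n, w k * c k = ∑ k ∈ Finset.range n, c k * w k :=
    Finset.sum_congr rfl (fun k _ => mul_comm _ _)
  rw [hflip, key]
  have h1 : 0 ≤ c (n - 1) * ∑ i ∈ Finset.range n, w i := by
    have hn1 : n - 1 < n := Nat.sub_lt hn one_pos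
    have := hP (n - 1) hn1
    rw [Nat.sub_add_cancel hn] at this
    exact mul_nonneg (hc0 _ hn1) this
  have h2 : ∑ i ∈ Finset.range (n - 1), (c (i + 1) - c i) * ∑ j ∈ Finset.range (i + 1), w j ≤ 0 := by
    apply Finset.sum_nonpos
    intro i hi
    rw [Finset.mem_range] at hi
    have hi' : i + 1 < n := by omega
    exact mul_nonpos_of_nonpos_of_nonneg (by linarith [hc i hi']) (hP i (by omega))
  linarith

lemma diff_mono {p : ℝ} (hp : 1 ≤ p) {x y t : ℝ} (hx : 0 ≤ x) (hxy : x ≤ y) (ht : 0 ≤ t) :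
    (x + t) ^ p - x ^ p ≤ (y + t) ^ p - y ^ p := by
  rcases eq_or_lt_of_le hxy with rfl | hxy
  · exact le_rfl
  rcases eq_or_lt_of_le ht with rfl | ht
  · simp
  have hd : 0 < y + t - x := by linarith
  set μ := (y - x) / (y + t - x) with hμdef
  set ν := t / (y + t - x) with hνdef
  have hμ : 0 ≤ μ := div_nonneg (by linarith) hd.le
  have hν : 0 ≤ ν := div_nonneg ht.le hd.le
  have hμν : μ + ν = 1 := by
    rw [hμdef, hνdef, ← add_div, div_eq_one_iff_eq hd.ne']
    ring
  have hf := convexOn_rpow hp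
  have hyt : (0:ℝ) ≤ y + t := by linarith
  have h1 := hf.2 (Set.mem_Ici.2 hx) (Set.mem_Ici.2 hyt) hμ hν hμν
  have h2 := hf.2 (Set.mem_Ici.2 hx) (Set.mem_Ici.2 hyt) hν hμ (by linarith)
  simp only [smul_eq_mul] at h1 h2
  have e1 : μ * x + ν * (y + t) = x + t := by
    rw [hμdef, hνdef]; field_simp; ring
  have e2 : ν * x + μ * (y + t) = y := by
    rw [hμdef, hνdef]; field_simp; ring
  rw [e1] at h1
  rw [e2] at h2
  have hsum : μ * x ^ p + ν * (y + t) ^ p + (ν * x ^ p + μ * (y + t) ^ p)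
      = x ^ p + (y + t) ^ p := by
    linear_combination (x ^ p + (y + t) ^ p) * hμν
  linarith

lemma two_rpow {p : ℝ} (hp : 1 ≤ p) {X Y : ℝ} (hX : 0 ≤ X) (hY : 0 ≤ Y) :
    X ^ (1 / p) + Y ^ (1 / p) ≤ 2 ^ (1 - 1 / p) * (X + Y) ^ (1 / p) := by
  have hp0 : 0 < p := lt_of_lt_of_le one_pos hp
  lift X to NNReal using hX
  lift Y to NNReal using hY
  have h := NNReal.rpow_add_le_mul_rpow_add_rpow (X ^ (1 / p)) (Y ^ (1 / p)) hp
  have hxp : (X ^ (1 / p)) ^ p = X := by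
    rw [← NNReal.rpow_mul, one_div_mul_cancel hp0.ne', NNReal.rpow_one]
  have hyp : (Y ^ (1 / p)) ^ p = Y := by
    rw [← NNReal.rpow_mul, one_div_mul_cancel hp0.ne', NNReal.rpow_one]
  rw [hxp, hyp] at h
  have h2 := NNReal.rpow_le_rpow h (by positivity : (0:ℝ) ≤ 1 / p)
  rw [← NNReal.rpow_mul, mul_one_div_cancel hp0.ne', NNReal.rpow_one,
    NNReal.mul_rpow, ← NNReal.rpow_mul] at h2
  have hexp : (p - 1) * (1 / p) = 1 - 1 / p := by field_simp
  rw [hexp] at h2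
  have := (NNReal.coe_le_coe).2 h2
  push_cast [NNReal.coe_rpow] at this ⊢
  convert this using 3

theorem stmt_6 (n : ℕ) (hn : 0 < n) (w a b : ℕ → ℝ) (p : ℝ) (hp : 1 ≤ p)
    (hP : ∀ k < n, 0 ≤ ∑ i ∈ Finset.range (k + 1), w i)
    (ha0 : ∀ k < n, 0 ≤ a k) (hb0 : ∀ k < n, 0 ≤ b k)
    (ha : ∀ i j, i ≤ j → j < n → a j ≤ a i)
    (hb : ∀ i j, i ≤ j → j < n → b j ≤ b i) :
    (∑ k ∈ Finset.range n, w k * a k ^ p) ^ (1 / p) +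
      (∑ k ∈ Finset.range n, w k * b k ^ p) ^ (1 / p) ≤
    2 ^ (1 - 1 / p) * (∑ k ∈ Finset.range n, w k * (a k + b k) ^ p) ^ (1 / p) := by
  have hp0 : 0 < p := lt_of_lt_of_le one_pos hp
  set X := ∑ k ∈ Finset.range n, w k * a k ^ p with hXdef
  set Y := ∑ k ∈ Finset.range n, w k * b k ^ p with hYdef
  set Z := ∑ k ∈ Finset.range n, w k * (a k + b k) ^ p with hZdef
  have hX : 0 ≤ X :=
    abel_nonneg n w (fun k => a k ^ p) hP
      (fun k hk => Real.rpow_nonneg (ha0 k hk) p)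
      (fun i hi => Real.rpow_le_rpow (ha0 (i + 1) hi) (ha i (i + 1) (Nat.le_succ i) hi) hp0.le)
  have hY : 0 ≤ Y :=
    abel_nonneg n w (fun k => b k ^ p) hP
      (fun k hk => Real.rpow_nonneg (hb0 k hk) p)
      (fun i hi => Real.rpow_le_rpow (hb0 (i + 1) hi) (hb i (i + 1) (Nat.le_succ i) hi) hp0.le)
  have hXYZ : X + Y ≤ Z := by
    have h := abel_nonneg n w (fun k => (a k + b k) ^ p - a k ^ p - b k ^ p) hP
      (fun k hk => by
        have h := diff_mono hp le_rfl (ha0 k hk) (hb0 k hk)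
        rw [zero_add, Real.zero_rpow (by positivity : p ≠ 0)] at h
        linarith)
      (fun i hi => by
        have hi' : i < n := by omega
        have s1 := diff_mono hp (ha0 (i + 1) hi) (ha i (i + 1) (Nat.le_succ i) hi)
          (hb0 (i + 1) hi)
        have s2 := diff_mono hp (hb0 (i + 1) hi) (hb i (i + 1) (Nat.le_succ i) hi)
          (ha0 i hi')
        rw [add_comm (b (i + 1)) (a i), add_comm (b i) (a i)] at s2
        have e : a i + b (i + 1) = a (i + 1) + b (i + 1) + (a i - a (i + 1)) := by ring
        linarith)
    have heq : ∑ k ∈ Finset.range n, w k * ((a k + b k) ^ p - a k ^ p - b k ^ p)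
        = Z - X - Y := by
      rw [hXdef, hYdef, hZdef, ← Finset.sum_sub_distrib, ← Finset.sum_sub_distrib]
      exact Finset.sum_congr rfl (fun k _ => by ring)
    rw [heq] at h
    linarith
  calc X ^ (1 / p) + Y ^ (1 / p) ≤ 2 ^ (1 - 1 / p) * (X + Y) ^ (1 / p) := two_rpow hp hX hY
    _ ≤ 2 ^ (1 - 1 / p) * Z ^ (1 / p) := by
        apply mul_le_mul_of_nonneg_left _ (by positivity)
        exact Real.rpow_le_rpow (by linarith) hXYZ (by positivity)
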